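/- Fix d ∈ ℕ, d ≥ 1. Define sequences by b₁⁽¹⁾ = b₁⁽²⁾ := 1 and, for n ≥ 2, bₙ⁽¹⁾ := (n−1)⁻¹ Σ_{n₁+n₂=n, n₁,n₂≥1} min(n₁,n₂)^{(d+5)/2} b_{n₁}⁽¹⁾ b_{n₂}⁽²⁾ and bₙ⁽²⁾ := n(n−1)⁻¹ Σ_{n₁+n₂=n, n₁,n₂≥1} min(n₁,n₂)^{(d+5)/2} b_{n₁}⁽¹⁾ b_{n₂}⁽¹⁾. Then for all n ≥ 1, bₙ⁽¹⁾ ≤ n^{−(d+5)/2−2} (2^{(d+5)/2+5})^{n−1} ≤ (2^{(d+15)/2})^{n}, and the same bounds hold for bₙ⁽²⁾; in particular there is a constant C_b > 0 (depending only on d) with bₙ⁽¹⁾, bₙ⁽²⁾ ≤ C_bⁿ for all n ≥ 1. -/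

import Mathlib

open Finset

private lemma sum_inv_sq (n : ℕ) : ∑ k ∈ Finset.Ico 1 n, (((k:ℝ))^2)⁻¹ ≤ 2 := by
  have key : ∀ m : ℕ, 1 ≤ m → ∑ k ∈ Finset.Ico 1 (m+1), (((k:ℝ))^2)⁻¹ ≤ 2 - 1/(m:ℝ) := by
    intro m hm
    induction m, hm using Nat.le_induction with
    | base =>
      rw [show Finset.Ico 1 (1+1) = {1} from rfl]
      norm_num
    | succ m hm ih =>
      rw [Finset.sum_Ico_succ_top (by omega)]
      have hm' : (1:ℝ) ≤ (m:ℝ) := by exact_mod_cast hm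
      have h1 : (0:ℝ) < m := by linarith
      have h2 : (0:ℝ) < (m:ℝ)+1 := by linarith
      have hstep : ((((m:ℝ)+1))^2)⁻¹ ≤ 1/(m:ℝ) - 1/((m:ℝ)+1) := by
        have he : 1/(m:ℝ) - 1/((m:ℝ)+1) = ((m:ℝ)*((m:ℝ)+1))⁻¹ := by
          field_simp; ring
        rw [he]
        apply inv_anti₀ (by positivity)
        nlinarith
      push_cast
      push_cast at ih
      linarith
  rcases Nat.lt_or_ge n 2 with h | h
  · interval_cases n <;> simp
  · have h2 := key (n-1) (by omega)
    rw [show n-1+1 = n by omega] at h2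
    have h3 : (0:ℝ) ≤ 1/((n-1:ℕ):ℝ) := by positivity
    linarith

private lemma sum_reflect (n : ℕ) (f : ℕ → ℝ) :
    ∑ k ∈ Finset.Ico 1 n, f (n - k) = ∑ k ∈ Finset.Ico 1 n, f k := by
  refine Finset.sum_nbij' (fun k => n - k) (fun k => n - k) ?_ ?_ ?_ ?_ ?_
  · intro a ha; simp only [Finset.mem_Ico] at *; omega
  · intro a ha; simp only [Finset.mem_Ico] at *; omega
  · intro a ha; simp only [Finset.mem_Ico] at *; omega
  · intro a ha; simp only [Finset.mem_Ico] at *; omega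
  · intro a ha; rfl

private lemma pt_le (α x y n : ℝ) (hα : 0 ≤ α) (hx : 1 ≤ x) (hy : 1 ≤ y) (hn : x + y = n) :
    (min x y) ^ α * x ^ (-α-2) * y ^ (-α-2) ≤ ((x^2)⁻¹ + (y^2)⁻¹) * (n/2) ^ (-α-2) := by
  have key : ∀ a b : ℝ, 1 ≤ a → 1 ≤ b → a ≤ b → a + b = n →
      a ^ α * a ^ (-α-2) * b ^ (-α-2) ≤ (a^2)⁻¹ * (n/2) ^ (-α-2) := by
    intro a b ha hb hab habn
    have ha0 : (0:ℝ) < a := by linarith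
    have hb0 : (0:ℝ) < b := by linarith
    have hn2 : n/2 ≤ b := by linarith
    have hn0 : (0:ℝ) < n/2 := by linarith
    have e1 : a ^ α * a ^ (-α-2) = (a^2)⁻¹ := by
      rw [← Real.rpow_add ha0, show α + (-α-2) = -(2:ℝ) by ring, Real.rpow_neg ha0.le]
      norm_num
    rw [e1]
    apply mul_le_mul_of_nonneg_left _ (by positivity)
    exact Real.rpow_le_rpow_of_nonpos hn0 hn2 (by linarith)
  rcases le_total x y with h | h
  · rw [min_eq_left h]
    have h0 : (0:ℝ) ≤ (y^2)⁻¹ * (n/2)^(-α-2) :=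
      mul_nonneg (by positivity) (Real.rpow_nonneg (by linarith) _)
    have := key x y hx hy h hn
    calc x ^ α * x ^ (-α-2) * y ^ (-α-2) ≤ (x^2)⁻¹ * (n/2) ^ (-α-2) := this
      _ ≤ ((x^2)⁻¹ + (y^2)⁻¹) * (n/2) ^ (-α-2) := by rw [add_mul]; linarith
  · rw [min_eq_right h]
    have h0 : (0:ℝ) ≤ (x^2)⁻¹ * (n/2)^(-α-2) :=
      mul_nonneg (by positivity) (Real.rpow_nonneg (by linarith) _)
    have := key y x hy hx h (by linarith)
    calc y ^ α * x ^ (-α-2) * y ^ (-α-2) = y ^ α * y ^ (-α-2) * x ^ (-α-2) := by ring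
      _ ≤ (y^2)⁻¹ * (n/2) ^ (-α-2) := this
      _ ≤ ((x^2)⁻¹ + (y^2)⁻¹) * (n/2) ^ (-α-2) := by rw [add_mul]; linarith

noncomputable def myAb (α : ℝ) (n : ℕ) : ℝ := (n:ℝ)^(-α-2) * ((2:ℝ)^(α+5))^(n-1)

private lemma myAb_nonneg (α : ℝ) (n : ℕ) : 0 ≤ myAb α n := by
  unfold myAb; positivity

private lemma bound_aux (α : ℝ) (hα : 3 ≤ α) (b₁ b₂ : ℕ → ℝ)
    (h₁ : b₁ 1 = 1) (h₂ : b₂ 1 = 1)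
    (hrec₁ : ∀ n, 2 ≤ n → b₁ n = 1 / ((n : ℝ) - 1) *
      ∑ k ∈ Finset.Ico 1 n, (min k (n - k) : ℝ) ^ α * b₁ k * b₂ (n - k))
    (hrec₂ : ∀ n, 2 ≤ n → b₂ n = (n : ℝ) / ((n : ℝ) - 1) *
      ∑ k ∈ Finset.Ico 1 n, (min k (n - k) : ℝ) ^ α * b₁ k * b₁ (n - k)) :
    ∀ n, 1 ≤ n → (0 ≤ b₁ n ∧ b₁ n ≤ myAb α n) ∧ (0 ≤ b₂ n ∧ b₂ n ≤ myAb α n) := by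
  intro n
  induction n using Nat.strong_induction_on with
  | _ n ih =>
    intro hn
    set M : ℝ := (2:ℝ)^(α+5) with hM
    rcases eq_or_lt_of_le hn with h1 | hn2
    · subst h1
      have : myAb α 1 = 1 := by
        simp [myAb, Real.one_rpow]
      rw [h₁, h₂, this]
      norm_num
    · -- n ≥ 2
      have hn2' : 2 ≤ n := hn2
      have hnR : (2:ℝ) ≤ (n:ℝ) := by exact_mod_cast hn2'
      have hn0 : (0:ℝ) < n := by linarith
      have hM1 : (1:ℝ) ≤ M := by
        calc (1:ℝ) = (2:ℝ)^(0:ℝ) := (Real.rpow_zero 2).symm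
          _ ≤ (2:ℝ)^(α+5) := Real.rpow_le_rpow_of_exponent_le one_le_two (by linarith)
      have hM0 : (0:ℝ) < M := by linarith
      -- generic sum bound
      have hsum : ∀ g : ℕ → ℝ, (∀ k, 1 ≤ k → k < n → 0 ≤ g k ∧ g k ≤ myAb α k) →
          (0 ≤ ∑ k ∈ Finset.Ico 1 n, (min (k:ℝ) ((n:ℝ)-(k:ℝ))) ^ α * b₁ k * g (n - k) ∧
           ∑ k ∈ Finset.Ico 1 n, (min (k:ℝ) ((n:ℝ)-(k:ℝ))) ^ α * b₁ k * g (n - k) ≤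
             4 * (((n:ℝ)/2)^(-α-2) * M^(n-2))) := by
        intro g hg
        have hb₁ : ∀ k, 1 ≤ k → k < n → 0 ≤ b₁ k ∧ b₁ k ≤ myAb α k :=
          fun k hk1 hk2 => ((ih k hk2) hk1).1
        have hmin : ∀ k ∈ Finset.Ico 1 n, (0:ℝ) ≤ min (k:ℝ) ((n:ℝ)-(k:ℝ)) := by
          intro k hk
          rw [Finset.mem_Ico] at hk
          have : (k:ℝ) ≤ (n:ℝ) := by exact_mod_cast hk.2.le
          exact le_min (by positivity) (by linarith)
        constructor
        · apply Finset.sum_nonneg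
          intro k hk
          have h0 := hmin k hk
          rw [Finset.mem_Ico] at hk
          exact mul_nonneg (mul_nonneg (Real.rpow_nonneg h0 α)
            (hb₁ k hk.1 hk.2).1) (hg (n-k) (by omega) (by omega)).1
        · calc ∑ k ∈ Finset.Ico 1 n, (min (k:ℝ) ((n:ℝ)-(k:ℝ))) ^ α * b₁ k * g (n - k)
              ≤ ∑ k ∈ Finset.Ico 1 n,
                ((((k:ℝ)^2)⁻¹ + ((((n-k:ℕ)):ℝ)^2)⁻¹) * (((n:ℝ)/2)^(-α-2) * M^(n-2))) := by
                apply Finset.sum_le_sum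
                intro k hk
                have h0 := hmin k hk
                rw [Finset.mem_Ico] at hk
                obtain ⟨hk1, hk2⟩ := hk
                have hkcast : (((n-k:ℕ)):ℝ) = (n:ℝ)-(k:ℝ) := by
                  rw [Nat.cast_sub hk2.le]
                have hx1 : (1:ℝ) ≤ (k:ℝ) := by exact_mod_cast hk1
                have hy1 : (1:ℝ) ≤ (n:ℝ)-(k:ℝ) := by
                  rw [← hkcast]
                  have : 1 ≤ n - k := by omega
                  exact_mod_cast this
                have hb := hb₁ k hk1 hk2
                have hgk := hg (n-k) (by omega) (by omega)
                have hp : 0 ≤ (min (k:ℝ) ((n:ℝ)-(k:ℝ))) ^ α := Real.rpow_nonneg h0 α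
                have step1 : (min (k:ℝ) ((n:ℝ)-(k:ℝ))) ^ α * b₁ k * g (n-k) ≤
                    (min (k:ℝ) ((n:ℝ)-(k:ℝ))) ^ α * myAb α k * myAb α (n-k) := by
                  apply mul_le_mul (mul_le_mul_of_nonneg_left hb.2 hp) hgk.2 hgk.1
                    (mul_nonneg hp (myAb_nonneg α k))
                have hexp : M^(k-1) * M^(n-k-1) = M^(n-2) := by
                  rw [← pow_add]; congr 1; omega
                have step2 : (min (k:ℝ) ((n:ℝ)-(k:ℝ))) ^ α * myAb α k * myAb α (n-k) =
                    ((min (k:ℝ) ((n:ℝ)-(k:ℝ))) ^ α * (k:ℝ)^(-α-2) * ((n:ℝ)-(k:ℝ))^(-α-2))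
                      * M^(n-2) := by
                  simp only [myAb, hkcast, ← hM]
                  rw [← hexp]; ring
                have step3 := pt_le α (k:ℝ) ((n:ℝ)-(k:ℝ)) (n:ℝ) (by linarith) hx1 hy1
                  (by ring)
                calc (min (k:ℝ) ((n:ℝ)-(k:ℝ))) ^ α * b₁ k * g (n-k)
                    ≤ (min (k:ℝ) ((n:ℝ)-(k:ℝ))) ^ α * myAb α k * myAb α (n-k) := step1
                  _ = ((min (k:ℝ) ((n:ℝ)-(k:ℝ))) ^ α * (k:ℝ)^(-α-2) * ((n:ℝ)-(k:ℝ))^(-α-2))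
                      * M^(n-2) := step2
                  _ ≤ ((((k:ℝ)^2)⁻¹ + (((n:ℝ)-(k:ℝ))^2)⁻¹) * (((n:ℝ)/2)^(-α-2))) * M^(n-2) := by
                      exact mul_le_mul_of_nonneg_right step3 (pow_nonneg hM0.le _)
                  _ = (((k:ℝ)^2)⁻¹ + ((((n-k:ℕ)):ℝ)^2)⁻¹) * (((n:ℝ)/2)^(-α-2) * M^(n-2)) := by
                      rw [hkcast]; ring
            _ = (∑ k ∈ Finset.Ico 1 n, (((k:ℝ)^2)⁻¹ + ((((n-k:ℕ)):ℝ)^2)⁻¹))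
                  * (((n:ℝ)/2)^(-α-2) * M^(n-2)) := by
                rw [Finset.sum_mul]
            _ ≤ 4 * (((n:ℝ)/2)^(-α-2) * M^(n-2)) := by
                apply mul_le_mul_of_nonneg_right _ (by positivity)
                rw [Finset.sum_add_distrib]
                have hrefl := sum_reflect n (fun m => (((m:ℕ):ℝ)^2)⁻¹)
                have hs := sum_inv_sq n
                rw [hrefl]
                linarith
      -- final arithmetic
      have h2p : (2:ℝ)^(-α-2:ℝ) = ((2:ℝ)^(α+2))⁻¹ := by
        rw [show (-α-2:ℝ) = -(α+2) by ring, Real.rpow_neg (by norm_num)]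
      have hdiv : ((n:ℝ)/2)^(-α-2) = (n:ℝ)^(-α-2) * (2:ℝ)^(α+2) := by
        rw [Real.div_rpow hn0.le (by norm_num : (0:ℝ) ≤ 2), h2p, div_eq_mul_inv, inv_inv]
      have h23 : (2:ℝ)^(3:ℝ) = 8 := by
        rw [show ((3:ℝ)) = ((3:ℕ):ℝ) by norm_num, Real.rpow_natCast]
        norm_num
      have h8 : (8:ℝ) * (2:ℝ)^(α+2) = M := by
        rw [hM, show α+5 = 3+(α+2) by ring,
          Real.rpow_add (show (0:ℝ) < 2 by norm_num) 3 (α+2), h23]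
      have hMsucc : M^(n-2) * M = M^(n-1) := by
        rw [← pow_succ]; congr 1; omega
      have hfinal : 2 * (4 * (((n:ℝ)/2)^(-α-2) * M^(n-2))) = myAb α n := by
        simp only [myAb, ← hM]
        rw [hdiv, ← hMsucc, ← h8]; ring
      have hBnn : (0:ℝ) ≤ 4 * (((n:ℝ)/2)^(-α-2) * M^(n-2)) := by positivity
      obtain ⟨hS1nn, hS1le⟩ := hsum b₂ (fun k hk1 hk2 => ((ih k hk2) hk1).2)
      obtain ⟨hS2nn, hS2le⟩ := hsum b₁ (fun k hk1 hk2 => ((ih k hk2) hk1).1)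
      have hden : (1:ℝ) ≤ (n:ℝ) - 1 := by linarith
      constructor
      · rw [hrec₁ n hn2']
        constructor
        · exact mul_nonneg (by positivity) hS1nn
        · have hle1 : 1/((n:ℝ)-1) ≤ 1 := by
            rw [div_le_one (by linarith)]; linarith
          calc 1/((n:ℝ)-1) * ∑ k ∈ Finset.Ico 1 n,
                (min (k:ℝ) ((n:ℝ)-(k:ℝ))) ^ α * b₁ k * b₂ (n - k)
              ≤ 1 * ∑ k ∈ Finset.Ico 1 n,
                (min (k:ℝ) ((n:ℝ)-(k:ℝ))) ^ α * b₁ k * b₂ (n - k) :=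
                mul_le_mul_of_nonneg_right hle1 hS1nn
            _ ≤ 4 * (((n:ℝ)/2)^(-α-2) * M^(n-2)) := by rw [one_mul]; exact hS1le
            _ ≤ myAb α n := by linarith
      · rw [hrec₂ n hn2']
        constructor
        · exact mul_nonneg (by positivity) hS2nn
        · have hle2 : (n:ℝ)/((n:ℝ)-1) ≤ 2 := by
            rw [div_le_iff₀ (by linarith)]; linarith
          calc (n:ℝ)/((n:ℝ)-1) * ∑ k ∈ Finset.Ico 1 n,
                (min (k:ℝ) ((n:ℝ)-(k:ℝ))) ^ α * b₁ k * b₁ (n - k)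
              ≤ 2 * ∑ k ∈ Finset.Ico 1 n,
                (min (k:ℝ) ((n:ℝ)-(k:ℝ))) ^ α * b₁ k * b₁ (n - k) :=
                mul_le_mul_of_nonneg_right hle2 hS2nn
            _ ≤ 2 * (4 * (((n:ℝ)/2)^(-α-2) * M^(n-2))) := by linarith
            _ = myAb α n := hfinal

theorem statement_1 (d : ℕ) (hd : 1 ≤ d) (b₁ b₂ : ℕ → ℝ)
    (h₁ : b₁ 1 = 1) (h₂ : b₂ 1 = 1)
    (hrec₁ : ∀ n, 2 ≤ n → b₁ n = 1 / ((n : ℝ) - 1) *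
      ∑ k ∈ Finset.Ico 1 n, (min k (n - k) : ℝ) ^ (((d : ℝ) + 5) / 2) * b₁ k * b₂ (n - k))
    (hrec₂ : ∀ n, 2 ≤ n → b₂ n = (n : ℝ) / ((n : ℝ) - 1) *
      ∑ k ∈ Finset.Ico 1 n, (min k (n - k) : ℝ) ^ (((d : ℝ) + 5) / 2) * b₁ k * b₁ (n - k)) :
    (∀ n, 1 ≤ n →
      (b₁ n ≤ (n : ℝ) ^ (-(((d : ℝ) + 5) / 2) - 2) * ((2 : ℝ) ^ (((d : ℝ) + 5) / 2 + 5)) ^ (n - 1) ∧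
        b₂ n ≤ (n : ℝ) ^ (-(((d : ℝ) + 5) / 2) - 2) * ((2 : ℝ) ^ (((d : ℝ) + 5) / 2 + 5)) ^ (n - 1)) ∧
      (n : ℝ) ^ (-(((d : ℝ) + 5) / 2) - 2) * ((2 : ℝ) ^ (((d : ℝ) + 5) / 2 + 5)) ^ (n - 1) ≤
        ((2 : ℝ) ^ (((d : ℝ) + 15) / 2)) ^ n) ∧
    ∃ C : ℝ, 0 < C ∧ ∀ n, 1 ≤ n → b₁ n ≤ C ^ n ∧ b₂ n ≤ C ^ n := by
  set α : ℝ := ((d : ℝ) + 5) / 2 with hαdef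
  have hα : 3 ≤ α := by
    have : (1:ℝ) ≤ (d:ℝ) := by exact_mod_cast hd
    rw [hαdef]; linarith
  have H := bound_aux α hα b₁ b₂ h₁ h₂ hrec₁ hrec₂
  have h15 : ((d : ℝ) + 15) / 2 = α + 5 := by rw [hαdef]; ring
  have hM1 : (1:ℝ) ≤ (2:ℝ)^(α+5) := by
    calc (1:ℝ) = (2:ℝ)^(0:ℝ) := (Real.rpow_zero 2).symm
      _ ≤ (2:ℝ)^(α+5) := Real.rpow_le_rpow_of_exponent_le one_le_two (by linarith)
  have hAC : ∀ n : ℕ, 1 ≤ n → myAb α n ≤ ((2 : ℝ) ^ (((d : ℝ) + 15) / 2)) ^ n := by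
    intro n hn
    rw [h15]
    unfold myAb
    have h1n : (1:ℝ) ≤ (n:ℝ) := by exact_mod_cast hn
    calc (n:ℝ)^(-α-2) * ((2:ℝ)^(α+5))^(n-1)
        ≤ 1 * ((2:ℝ)^(α+5))^(n-1) := by
          apply mul_le_mul_of_nonneg_right
            (Real.rpow_le_one_of_one_le_of_nonpos h1n (by linarith)) (by positivity)
      _ = ((2:ℝ)^(α+5))^(n-1) := one_mul _
      _ ≤ ((2:ℝ)^(α+5))^n := pow_le_pow_right₀ hM1 (Nat.sub_le n 1)
  constructor
  · intro n hn
    obtain ⟨⟨_, e1⟩, _, e2⟩ := H n hn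
    unfold myAb at e1 e2
    exact ⟨⟨e1, e2⟩, by have := hAC n hn; unfold myAb at this; exact this⟩
  · refine ⟨(2 : ℝ) ^ (((d : ℝ) + 15) / 2), by positivity, ?_⟩
    intro n hn
    obtain ⟨⟨_, e1⟩, _, e2⟩ := H n hn
    exact ⟨e1.trans (hAC n hn), e2.trans (hAC n hn)⟩
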